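/- Let A : V₁ → V₂* be the operator induced by a bilinear form a satisfying continuity with constant M_a, nondegeneracy, and an inf-sup condition with constant m_a > 0. If v ∈ V₁ solves Av = g and ṽ ∈ V₁ is arbitrary, then (1/M_a)‖g − Aṽ‖_{2,*} ≤ ‖v − ṽ‖₁ ≤ (1/m_a)‖g − Aṽ‖_{2,*}. -/

import Mathlib

/-- Error–residual equivalence for the state equation: if `A : V₁ → V₂*` is induced by a
bilinear form with continuity constant `Ma`, nondegeneracy, and inf-sup constant `ma > 0`,
`A v = g`, and `vt` is arbitrary, then
`(1/Ma) ‖g - A vt‖_* ≤ ‖v - vt‖ ≤ (1/ma) ‖g - A vt‖_*`. -/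
theorem stmt5 {V₁ V₂ : Type*}
    [NormedAddCommGroup V₁] [InnerProductSpace ℝ V₁] [CompleteSpace V₁]
    [NormedAddCommGroup V₂] [InnerProductSpace ℝ V₂] [CompleteSpace V₂]
    (A : V₁ →L[ℝ] StrongDual ℝ V₂) (Ma ma : ℝ) (hMa : 0 < Ma) (hma : 0 < ma)
    (hcont : ∀ v₁ : V₁, ‖A v₁‖ ≤ Ma * ‖v₁‖)
    (hinfsup : ∀ v₁ : V₁, ma * ‖v₁‖ ≤ ‖A v₁‖)
    (hnd : ∀ v₁ : V₁, (∀ v₂ : V₂, A v₁ v₂ = 0) → v₁ = 0)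
    (g : StrongDual ℝ V₂) (v vt : V₁) (hv : A v = g) :
    (1 / Ma) * ‖g - A vt‖ ≤ ‖v - vt‖ ∧ ‖v - vt‖ ≤ (1 / ma) * ‖g - A vt‖ := by
  have h : g - A vt = A (v - vt) := by rw [map_sub, hv]
  rw [h]
  constructor
  · rw [div_mul_eq_mul_div, one_mul, div_le_iff₀ hMa, mul_comm]
    exact hcont _
  · rw [div_mul_eq_mul_div, one_mul, le_div_iff₀ hma, mul_comm]
    exact hinfsup _
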